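/- Let l > 0 and a, b ≥ 0. Define x = artanh(sinh(l/2)·sinh(a) / (cosh(b) + cosh(l/2)·cosh(a))) and y = artanh(sinh(l/2)·sinh(b) / (cosh(a) + cosh(l/2)·cosh(b))). Then tanh(x + y) = sinh(l/2)·sinh(a+b) / (1 + cosh(l/2)·cosh(a+b)). -/

import Mathlib

open Real

/-- The real inverse hyperbolic tangent. -/
noncomputable def artanh (x : ℝ) : ℝ := (1/2) * Real.log ((1 + x) / (1 - x))

lemma tanh_artanh' {u : ℝ} (h1 : -1 < u) (h2 : u < 1) : Real.tanh (_root_.artanh u) = u := by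
  have hpos : (0:ℝ) < (1 + u) / (1 - u) := by apply div_pos <;> linarith
  have hE : Real.exp (2 * _root_.artanh u) = (1 + u) / (1 - u) := by
    rw [_root_.artanh, show 2 * ((1:ℝ)/2 * Real.log ((1 + u) / (1 - u)))
      = Real.log ((1+u)/(1-u)) by ring]
    exact Real.exp_log hpos
  have ht : Real.tanh (_root_.artanh u)
      = (Real.exp (2 * _root_.artanh u) - 1) / (Real.exp (2 * _root_.artanh u) + 1) := by
    rw [Real.tanh_eq_sinh_div_cosh, Real.sinh_eq, Real.cosh_eq]
    have he : Real.exp (2 * _root_.artanh u) = Real.exp (_root_.artanh u) * Real.exp (_root_.artanh u) := by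
      rw [← Real.exp_add]; ring_nf
    have hne : Real.exp (_root_.artanh u) ≠ 0 := (Real.exp_pos _).ne'
    rw [he, Real.exp_neg]
    have hpos2 : (0:ℝ) < Real.exp (_root_.artanh u) * Real.exp (_root_.artanh u) + 1 := by positivity
    field_simp
  rw [ht, hE]
  have h1u : (1:ℝ) - u ≠ 0 := by linarith
  have h2u : (1 + u) / (1 - u) + 1 ≠ 0 := by
    have : (1 + u) / (1 - u) + 1 = 2 / (1 - u) := by field_simp; ring
    rw [this]; positivity
  field_simp
  ring

lemma alg_identity (S C sa ca sb cb : ℝ)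
    (e1 : C^2 - S^2 = 1) (e2 : ca^2 - sa^2 = 1) (e3 : cb^2 - sb^2 = 1)
    (hd1 : cb + C*ca ≠ 0) (hd2 : ca + C*cb ≠ 0)
    (hB : (cb + C*ca)*(ca + C*cb) + S*sa*(S*sb) ≠ 0)
    (hDr : 1 + C*(ca*cb + sa*sb) ≠ 0) :
    (S*sa/(cb + C*ca) + S*sb/(ca + C*cb)) /
      (1 + S*sa/(cb + C*ca) * (S*sb/(ca + C*cb)))
    = S*(sa*cb + ca*sb) / (1 + C*(ca*cb + sa*sb)) := by
  rw [div_add_div _ _ hd1 hd2, div_mul_div_comm]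
  have h2 : 1 + S*sa*(S*sb)/((cb + C*ca)*(ca + C*cb))
      = ((cb + C*ca)*(ca + C*cb) + S*sa*(S*sb))/((cb + C*ca)*(ca + C*cb)) := by
    rw [eq_div_iff (mul_ne_zero hd1 hd2), add_mul, div_mul_cancel₀ _ (mul_ne_zero hd1 hd2)]; ring
  rw [h2]
  have hd12 : (cb + C*ca)*(ca + C*cb) ≠ 0 := mul_ne_zero hd1 hd2
  rw [div_div_div_cancel_right₀ hd12]
  rw [div_eq_div_iff hB hDr]
  linear_combination (S*sa*ca*sb^2 + S*sa^2*sb*cb) * e1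
    + (-(S*sb*cb) - S*C*ca*sb) * e2 + (-(S*sa*ca) - S*C*sa*cb) * e3

theorem tanh_add_gap_boundary_geodesic (l a b x y : ℝ)
    (hl : 0 < l) (ha : 0 ≤ a) (hb : 0 ≤ b)
    (hx : x = _root_.artanh (Real.sinh (l/2) * Real.sinh a /
      (Real.cosh b + Real.cosh (l/2) * Real.cosh a)))
    (hy : y = _root_.artanh (Real.sinh (l/2) * Real.sinh b /
      (Real.cosh a + Real.cosh (l/2) * Real.cosh b))) :
    Real.tanh (x + y) = Real.sinh (l/2) * Real.sinh (a + b) /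
      (1 + Real.cosh (l/2) * Real.cosh (a + b)) := by
  set L := l/2 with hL
  set u := Real.sinh L * Real.sinh a / (Real.cosh b + Real.cosh L * Real.cosh a) with hu
  set v := Real.sinh L * Real.sinh b / (Real.cosh a + Real.cosh L * Real.cosh b) with hv
  have hca : (1:ℝ) ≤ Real.cosh a := Real.one_le_cosh a
  have hcb : (1:ℝ) ≤ Real.cosh b := Real.one_le_cosh b
  have hcL : (1:ℝ) ≤ Real.cosh L := Real.one_le_cosh L
  have hsa : 0 ≤ Real.sinh a := Real.sinh_nonneg_iff.2 ha
  have hsb : 0 ≤ Real.sinh b := Real.sinh_nonneg_iff.2 hb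
  have hsL : 0 ≤ Real.sinh L := Real.sinh_nonneg_iff.2 (by rw [hL]; positivity)
  have hd1 : (0:ℝ) < Real.cosh b + Real.cosh L * Real.cosh a := by nlinarith
  have hd2 : (0:ℝ) < Real.cosh a + Real.cosh L * Real.cosh b := by nlinarith
  have key1 : Real.sinh L * Real.sinh a < Real.cosh b + Real.cosh L * Real.cosh a := by
    have h := Real.cosh_pos (x := a - L)
    rw [Real.cosh_sub] at h
    nlinarith
  have key2 : Real.sinh L * Real.sinh b < Real.cosh a + Real.cosh L * Real.cosh b := by
    have h := Real.cosh_pos (x := b - L)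
    rw [Real.cosh_sub] at h
    nlinarith
  have hu0 : 0 ≤ u := by rw [hu]; positivity
  have hv0 : 0 ≤ v := by rw [hv]; positivity
  have hu1 : u < 1 := by rw [hu, div_lt_one hd1]; exact key1
  have hv1 : v < 1 := by rw [hv, div_lt_one hd2]; exact key2
  have htx : Real.tanh x = u := by rw [hx]; exact tanh_artanh' (by linarith) hu1
  have hty : Real.tanh y = v := by rw [hy]; exact tanh_artanh' (by linarith) hv1
  have hcx : (0:ℝ) < Real.cosh x := Real.cosh_pos x
  have hcy : (0:ℝ) < Real.cosh y := Real.cosh_pos y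
  have hadd : Real.tanh (x + y) = (u + v) / (1 + u * v) := by
    rw [← htx, ← hty, Real.tanh_eq_sinh_div_cosh, Real.tanh_eq_sinh_div_cosh,
      Real.tanh_eq_sinh_div_cosh, Real.sinh_add, Real.cosh_add]
    have hne : Real.cosh x * Real.cosh y + Real.sinh x * Real.sinh y ≠ 0 := by
      rw [← Real.cosh_add]; exact (Real.cosh_pos _).ne'
    have hne2 : 1 + Real.sinh x / Real.cosh x * (Real.sinh y / Real.cosh y) ≠ 0 := by
      rw [← Real.tanh_eq_sinh_div_cosh, ← Real.tanh_eq_sinh_div_cosh, htx, hty]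
      nlinarith
    field_simp
  rw [hadd, hu, hv, Real.sinh_add, Real.cosh_add]
  have hB : (0:ℝ) < (Real.cosh b + Real.cosh L * Real.cosh a) *
      (Real.cosh a + Real.cosh L * Real.cosh b)
      + Real.sinh L * Real.sinh a * (Real.sinh L * Real.sinh b) := by
    have h1 := mul_pos hd1 hd2
    have h2 := mul_nonneg (mul_nonneg hsL hsa) (mul_nonneg hsL hsb)
    linarith
  have hDr : (0:ℝ) < 1 + Real.cosh L *
      (Real.cosh a * Real.cosh b + Real.sinh a * Real.sinh b) := by
    have h1 : (0:ℝ) ≤ Real.sinh a * Real.sinh b := mul_nonneg hsa hsb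
    have h2 : (0:ℝ) ≤ Real.cosh a * Real.cosh b := by nlinarith
    have h3 : (0:ℝ) ≤ Real.cosh L * (Real.cosh a * Real.cosh b + Real.sinh a * Real.sinh b) :=
      mul_nonneg (by linarith) (by linarith)
    linarith
  exact alg_identity (Real.sinh L) (Real.cosh L) (Real.sinh a) (Real.cosh a)
    (Real.sinh b) (Real.cosh b)
    (Real.cosh_sq_sub_sinh_sq L) (Real.cosh_sq_sub_sinh_sq a) (Real.cosh_sq_sub_sinh_sq b)
    hd1.ne' hd2.ne' hB.ne' hDr.ne'
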